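/- General Normal Factor Graph Duality Theorem: Let G = (V, E_int, E_ext, f_V) be an NFG in which every edge alphabet X_e is a finite abelian group. Form the dual NFG Ĝ as follows: each edge e now carries the character group X_e^∧; each local function f_v is replaced by its Fourier transform F[f_v] : ∏_{e∈E(v)} X_e^∧ → ℂ, F[f_v](x̂_{E(v)}) := ∑_{x_{E(v)}} f_v(x_{E(v)}) · ∏_{e∈E(v)} x̂_e(x_e); and into each internal edge e a new vertex is inserted carrying the local function δ_+ : X_e^∧ × X_e^∧ → ℂ, where δ_+(x̂, x̂') = 1 if x̂ + x̂' = 0 and 0 otherwise. Then Z_Ĝ = |X_{E_int}| · F[Z_G], where |X_{E_int}| := ∏_{e∈E_int} |X_e| and F[Z_G](x̂_{E_ext}) := ∑_{x_{E_ext}} Z_G(x_{E_ext}) · ∏_{e∈E_ext} x̂_e(x_e). -/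

import Mathlib

open scoped BigOperators Classical

/-! # Normal factor graphs -/

/-- `Inc ends extEnd v e` means edge `e` is incident to vertex `v`. -/
def Inc {V Ei Ee : Type} (ends : Ei → V × V) (extEnd : Ee → V) (v : V) :
    Ei ⊕ Ee → Prop
  | .inl i => (ends i).1 = v ∨ (ends i).2 = v
  | .inr j => extEnd j = v

/-- Combine an internal and an external configuration into a configuration on all edges. -/
def combine {Ei Ee : Type} {X : Ei ⊕ Ee → Type}
    (xi : ∀ i : Ei, X (.inl i)) (xe : ∀ j : Ee, X (.inr j)) : ∀ e, X e
  | .inl i => xi i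
  | .inr j => xe j

/-- The exterior function realized by a normal factor graph. -/
noncomputable def Zfun {V Ei Ee : Type} [Fintype V] [Fintype Ei]
    (X : Ei ⊕ Ee → Type) [∀ e, Fintype (X e)]
    (ends : Ei → V × V) (extEnd : Ee → V)
    (f : ∀ v : V, ((e : {e : Ei ⊕ Ee // Inc ends extEnd v e}) → X e.1) → ℂ)
    (xe : ∀ j : Ee, X (.inr j)) : ℂ :=
  ∑ xi : ∀ i : Ei, X (.inl i), ∏ v : V, f v fun e => combine xi xe e.1

/-! ## The dual NFG

The dual NFG `Ĝ` of `G` has vertices `V ⊕ Ei` (one new `δ₊` vertex in the middle of each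
internal edge), internal edges `Ei ⊕ Ei` (the two halves of each original internal edge),
and external edges `Ee`.  Each (half-)edge coming from an edge `e` of `G` carries the
character group `(X e)^∧ = AddChar (X e) ℂ`; each original vertex carries the Fourier
transform of its local function, and each new vertex carries `δ₊`. -/

section DualNFG

variable {V Ei Ee : Type} (X : Ei ⊕ Ee → Type) [∀ e, AddCommGroup (X e)]
  (ends : Ei → V × V) (extEnd : Ee → V)

/-- Edge alphabets of the dual NFG: character groups. -/
@[reducible] def Xhat : (Ei ⊕ Ei) ⊕ Ee → Type
  | .inl (.inl i) => AddChar (X (.inl i)) ℂ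
  | .inl (.inr i) => AddChar (X (.inl i)) ℂ
  | .inr j => AddChar (X (.inr j)) ℂ

noncomputable instance XhatFintype [∀ e, Fintype (X e)] : ∀ e, Fintype (Xhat X e)
  | .inl (.inl i) => inferInstanceAs (Fintype (AddChar (X (.inl i)) ℂ))
  | .inl (.inr i) => inferInstanceAs (Fintype (AddChar (X (.inl i)) ℂ))
  | .inr j => inferInstanceAs (Fintype (AddChar (X (.inr j)) ℂ))

/-- Endpoints of the internal edges of the dual NFG: `.inl i` is the half of `i` from
`(ends i).1` to the new vertex `i`, and `.inr i` the half from the new vertex `i`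
to `(ends i).2`. -/
def dEnds : Ei ⊕ Ei → (V ⊕ Ei) × (V ⊕ Ei)
  | .inl i => (.inl (ends i).1, .inr i)
  | .inr i => (.inr i, .inl (ends i).2)

/-- Attachment of the external edges of the dual NFG. -/
def dExtEnd : Ee → V ⊕ Ei := fun j => .inl (extEnd j)

/-- The character attached by a dual configuration `ψ` at vertex `v` to an original edge
slot `e` incident to `v`. -/
noncomputable def charAt (v : V)
    (ψ : (e' : {e' : (Ei ⊕ Ei) ⊕ Ee //
        Inc (dEnds ends) (dExtEnd extEnd) (.inl v) e'}) → Xhat X e'.1) :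
    (e : {e : Ei ⊕ Ee // Inc ends extEnd v e}) → AddChar (X e.1) ℂ :=
  fun e =>
    match e with
    | ⟨.inl i, h⟩ =>
        if h1 : (ends i).1 = v then
          ψ ⟨.inl (.inl i), Or.inl (congrArg (Sum.inl : V → V ⊕ Ei) h1)⟩
        else
          ψ ⟨.inl (.inr i), Or.inr (congrArg (Sum.inl : V → V ⊕ Ei)
              (h.resolve_left h1))⟩
    | ⟨.inr j, h⟩ => ψ ⟨.inr j, congrArg (Sum.inl : V → V ⊕ Ei) h⟩

/-- Local functions of the dual NFG: each original vertex `v` carries the Fourier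
transform `F[f v]` of its local function, and each new vertex (one per original internal
edge) carries `δ₊`, the indicator that the two adjacent characters sum to zero (written
multiplicatively: their product is the trivial character). -/
noncomputable def dualF [Fintype Ei] [Fintype Ee] [∀ e, Fintype (X e)]
    (f : ∀ v : V, ((e : {e : Ei ⊕ Ee // Inc ends extEnd v e}) → X e.1) → ℂ) :
    ∀ w : V ⊕ Ei,
      ((e' : {e' : (Ei ⊕ Ei) ⊕ Ee //
          Inc (dEnds ends) (dExtEnd extEnd) w e'}) → Xhat X e'.1) → ℂ
  | .inl v => fun ψ =>
      ∑ xv : (e : {e : Ei ⊕ Ee // Inc ends extEnd v e}) → X e.1,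
        f v xv * ∏ e : {e : Ei ⊕ Ee // Inc ends extEnd v e},
          (charAt X ends extEnd v ψ e) (xv e)
  | .inr i => fun ψ =>
      if (ψ ⟨.inl (.inl i), Or.inr rfl⟩) * (ψ ⟨.inl (.inr i), Or.inl rfl⟩) = 1
      then 1 else 0

end DualNFG


/-! ## Auxiliary material for the proof -/

section AuxProof

variable {V Ei Ee : Type} (X : Ei ⊕ Ee → Type)
  (ends : Ei → V × V) (extEnd : Ee → V)

/-- The slots (vertex, incident edge) of an NFG, enumerated edgewise. -/
noncomputable def slotEquiv (hne : ∀ i : Ei, (ends i).1 ≠ (ends i).2) :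
    ((Ei ⊕ Ei) ⊕ Ee) ≃ (Σ v : V, {e : Ei ⊕ Ee // Inc ends extEnd v e}) where
  toFun := fun e => match e with
    | .inl (.inl i) => ⟨(ends i).1, ⟨.inl i, Or.inl rfl⟩⟩
    | .inl (.inr i) => ⟨(ends i).2, ⟨.inl i, Or.inr rfl⟩⟩
    | .inr j => ⟨extEnd j, ⟨.inr j, rfl⟩⟩
  invFun := fun s => match s with
    | ⟨v, ⟨.inl i, _⟩⟩ => if (ends i).1 = v then .inl (.inl i) else .inl (.inr i)
    | ⟨v, ⟨.inr j, _⟩⟩ => .inr j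
  left_inv := by
    rintro ((i | i) | j)
    · simp
    · simp [hne i]
    · rfl
  right_inv := by
    rintro ⟨v, ⟨(i | j), h⟩⟩
    · by_cases h1 : (ends i).1 = v
      · subst h1; simp
      · have h2 : (ends i).2 = v := h.resolve_left h1
        subst h2; simp [h1]
    · have h' : extEnd j = v := h
      subst h'; rfl

/-- Configurations of an NFG, enumerated edgewise. -/
noncomputable def configEquiv (hne : ∀ i : Ei, (ends i).1 ≠ (ends i).2) :
    (∀ v : V, (e : {e : Ei ⊕ Ee // Inc ends extEnd v e}) → X e.1) ≃
      (((∀ i : Ei, X (.inl i)) × (∀ i : Ei, X (.inl i))) × (∀ j : Ee, X (.inr j))) where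
  toFun := fun g =>
    ((fun i => g (ends i).1 ⟨.inl i, Or.inl rfl⟩, fun i => g (ends i).2 ⟨.inl i, Or.inr rfl⟩),
      fun j => g (extEnd j) ⟨.inr j, rfl⟩)
  invFun := fun t v e => match e with
    | ⟨.inl i, _⟩ => if (ends i).1 = v then t.1.1 i else t.1.2 i
    | ⟨.inr j, _⟩ => t.2 j
  left_inv := by
    intro g
    funext v e
    rcases e with ⟨(i | j), h⟩
    · by_cases h1 : (ends i).1 = v
      · subst h1; simp
      · have h2 : (ends i).2 = v := h.resolve_left h1
        subst h2; simp [h1]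
    · have h' : extEnd j = v := h
      subst h'; rfl
  right_inv := by
    rintro ⟨⟨a, b⟩, q⟩
    refine Prod.ext (Prod.ext ?_ ?_) ?_
    · funext i; simp
    · funext i; simp [hne i]
    · rfl

variable [∀ e, AddCommGroup (X e)] in
/-- The character attached by `χ` (and `ψe`) to the slot `(v, e)`. -/
noncomputable def cChar (ψe : ∀ j : Ee, AddChar (X (.inr j)) ℂ)
    (χ : ∀ i : Ei, AddChar (X (.inl i)) ℂ) (v : V) :
    (e : {e : Ei ⊕ Ee // Inc ends extEnd v e}) → AddChar (X e.1) ℂ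
  | ⟨.inl i, _⟩ => if (ends i).1 = v then χ i else (χ i)⁻¹
  | ⟨.inr j, _⟩ => ψe j

end AuxProof

lemma sum_univ_fintype_congr {α M : Type} [AddCommMonoid M] (i1 i2 : Fintype α)
    (F : α → M) :
    @Finset.sum α M _ (@Finset.univ α i1) F = @Finset.sum α M _ (@Finset.univ α i2) F := by
  rw [Subsingleton.elim i1 i2]

lemma prod_ite_zero {ι : Type} [Fintype ι] (p : ι → Prop) [DecidablePred p] (c : ι → ℂ) :
    (∏ i, if p i then c i else 0) = if ∀ i, p i then ∏ i, c i else 0 := by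
  by_cases h : ∀ i, p i
  · rw [if_pos h]; exact Finset.prod_congr rfl fun i _ => if_pos (h i)
  · rw [if_neg h]
    push_neg at h
    obtain ⟨i, hi⟩ := h
    exact Finset.prod_eq_zero (Finset.mem_univ i) (if_neg hi)

/-- **General Normal Factor Graph Duality Theorem.**
Let `G = (V, Ei, Ee, f)` be an NFG all of whose edge alphabets `X e` are finite abelian
groups, and let `Ĝ` be the dual NFG, obtained by letting each edge carry the character
group of its alphabet, replacing each local function by its Fourier transform, and
inserting a `δ₊` vertex into each internal edge.  Then
`Z_Ĝ = |X_{E_int}| · F[Z_G]`, where `|X_{E_int}| = ∏_{internal e} |X e|` and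
`F[Z_G](ψ) = ∑ x_ext, Z_G(x_ext) · ∏_{external e} ψ_e (x_e)`. -/
theorem general_nfg_duality_theorem {V Ei Ee : Type}
    [Fintype V] [Fintype Ei] [Fintype Ee]
    (X : Ei ⊕ Ee → Type) [∀ e, AddCommGroup (X e)] [∀ e, Fintype (X e)]
    (ends : Ei → V × V) (hne : ∀ i : Ei, (ends i).1 ≠ (ends i).2)
    (extEnd : Ee → V)
    (f : ∀ v : V, ((e : {e : Ei ⊕ Ee // Inc ends extEnd v e}) → X e.1) → ℂ)
    (ψe : ∀ j : Ee, AddChar (X (.inr j)) ℂ) :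
    Zfun (Xhat X) (dEnds ends) (dExtEnd extEnd) (dualF X ends extEnd f) ψe
      = (∏ i : Ei, (Fintype.card (X (.inl i)) : ℂ))
          * ∑ xe : ∀ j : Ee, X (.inr j),
              Zfun X ends extEnd f xe * ∏ j : Ee, ψe j (xe j) := by
  classical
  set C : ℂ := ∏ i : Ei, (Fintype.card (X (.inl i)) : ℂ) with hC
  -- the pair-of-characters reindexing for the dual internal edges
  set e1 := (Equiv.sumPiEquivProdPi fun e' : Ei ⊕ Ei => Xhat X (.inl e')).symm with he1
  have step1 :
      Zfun (Xhat X) (dEnds ends) (dExtEnd extEnd) (dualF X ends extEnd f) ψe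
        = ∑ χ : ∀ i : Ei, AddChar (X (.inl i)) ℂ,
            ∏ v : V, dualF X ends extEnd f (.inl v)
              (fun e => combine (e1 (χ, fun i => (χ i)⁻¹)) ψe e.1) := by
    rw [Zfun]
    have hre := Fintype.sum_equiv e1
      (fun p : ((∀ i : Ei, AddChar (X (.inl i)) ℂ) × (∀ i : Ei, AddChar (X (.inl i)) ℂ)) =>
        ∏ w : V ⊕ Ei, dualF X ends extEnd f w (fun e => combine (e1 p) ψe e.1))
      (fun ψi => ∏ w : V ⊕ Ei, dualF X ends extEnd f w (fun e => combine ψi ψe e.1))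
      (fun p => rfl)
    refine Eq.trans (sum_univ_fintype_congr _ _ _) (Eq.trans hre.symm ?_)
    rw [Fintype.sum_prod_type]
    refine Finset.sum_congr rfl fun χ1 _ => ?_
    set A := fun χ2 : ∀ i : Ei, AddChar (X (.inl i)) ℂ =>
      ∏ v : V, dualF X ends extEnd f (.inl v)
        (fun e => combine (e1 (χ1, χ2)) ψe e.1) with hA
    have hsplit : ∀ χ2 : ∀ i : Ei, AddChar (X (.inl i)) ℂ,
        (∏ w : V ⊕ Ei, dualF X ends extEnd f w (fun e => combine (e1 (χ1, χ2)) ψe e.1))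
          = A χ2 * if (∀ i : Ei, χ1 i * χ2 i = 1) then 1 else 0 := by
      intro χ2
      rw [Fintype.prod_sum_type]
      congr 1
      calc ∏ i : Ei, dualF X ends extEnd f (.inr i)
            (fun e => combine (e1 (χ1, χ2)) ψe e.1)
          = ∏ i : Ei, if χ1 i * χ2 i = 1 then (1:ℂ) else 0 :=
            Finset.prod_congr rfl fun i _ => rfl
        _ = _ := by rw [Finset.prod_boole]; simp
    simp_rw [hsplit]
    have hA2 : ∀ χ2, A χ2 * (if (∀ i : Ei, χ1 i * χ2 i = 1) then (1:ℂ) else 0)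
        = if χ2 = (fun i => (χ1 i)⁻¹) then A χ2 else 0 := by
      intro χ2
      by_cases h : χ2 = fun i => (χ1 i)⁻¹
      · subst h; rw [if_pos rfl, if_pos, mul_one]
        intro i; simp
      · rw [if_neg h, if_neg, mul_zero]
        intro hall; exact h (funext fun i => eq_inv_of_mul_eq_one_right (hall i))
    simp_rw [hA2]
    rw [Finset.sum_ite_eq' Finset.univ (fun i => (χ1 i)⁻¹) A]
    simp [hA]
  have hchar : ∀ (χ : ∀ i : Ei, AddChar (X (.inl i)) ℂ) (v : V),
      charAt X ends extEnd v
          (fun e' => combine (e1 (χ, fun i => (χ i)⁻¹)) ψe e'.1)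
        = cChar X ends extEnd ψe χ v := by
    intro χ v
    funext e
    rcases e with ⟨(i | j), h⟩
    · by_cases h1 : (ends i).1 = v
      · simp only [charAt, cChar]
        rw [dif_pos h1, if_pos h1]
        rfl
      · simp only [charAt, cChar]
        rw [dif_neg h1, if_neg h1]
        rfl
    · rfl
  have step2 : ∀ (χ : ∀ i : Ei, AddChar (X (.inl i)) ℂ) (v : V),
      dualF X ends extEnd f (.inl v)
          (fun e' => combine (e1 (χ, fun i => (χ i)⁻¹)) ψe e'.1)
        = ∑ xv : (e : {e : Ei ⊕ Ee // Inc ends extEnd v e}) → X e.1,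
            f v xv * ∏ e : {e : Ei ⊕ Ee // Inc ends extEnd v e},
              cChar X ends extEnd ψe χ v e (xv e) := by
    intro χ v
    simp only [dualF, hchar]
  have step4 : ∀ (χ : ∀ i : Ei, AddChar (X (.inl i)) ℂ)
      (g : ∀ v : V, (e : {e : Ei ⊕ Ee // Inc ends extEnd v e}) → X e.1),
      (∏ v : V, ∏ e : {e : Ei ⊕ Ee // Inc ends extEnd v e},
          cChar X ends extEnd ψe χ v e (g v e))
        = ((∏ i : Ei, χ i (g (ends i).1 ⟨.inl i, Or.inl rfl⟩))
            * ∏ i : Ei, (χ i)⁻¹ (g (ends i).2 ⟨.inl i, Or.inr rfl⟩))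
            * ∏ j : Ee, ψe j (g (extEnd j) ⟨.inr j, rfl⟩) := by
    intro χ g
    rw [Finset.prod_sigma' Finset.univ (fun v => Finset.univ)
      (fun v (e : {e : Ei ⊕ Ee // Inc ends extEnd v e}) =>
        cChar X ends extEnd ψe χ v e (g v e))]
    rw [Finset.univ_sigma_univ]
    have hre := Fintype.prod_equiv (slotEquiv ends extEnd hne)
      (fun t : (Ei ⊕ Ei) ⊕ Ee =>
        cChar X ends extEnd ψe χ (slotEquiv ends extEnd hne t).1
          (slotEquiv ends extEnd hne t).2
          (g (slotEquiv ends extEnd hne t).1 (slotEquiv ends extEnd hne t).2))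
      (fun s : Σ v : V, {e : Ei ⊕ Ee // Inc ends extEnd v e} =>
        cChar X ends extEnd ψe χ s.1 s.2 (g s.1 s.2))
      (fun t => rfl)
    refine Eq.trans hre.symm ?_
    rw [Fintype.prod_sum_type, Fintype.prod_sum_type]
    congr 1
    · congr 1
      · refine Finset.prod_congr rfl fun i _ => ?_
        simp [slotEquiv, cChar]
        rfl
      · refine Finset.prod_congr rfl fun i _ => ?_
        simp [slotEquiv, cChar, hne i]
        exact AddChar.inv_apply ..
  have step5 : ∀ a b : ∀ i : Ei, X (.inl i),
      (∑ χ : ∀ i : Ei, AddChar (X (.inl i)) ℂ,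
          (∏ i, χ i (a i)) * ∏ i, (χ i)⁻¹ (b i))
        = if a = b then C else 0 := by
    intro a b
    have h1 : ∀ χ : ∀ i : Ei, AddChar (X (.inl i)) ℂ,
        ((∏ i, χ i (a i)) * ∏ i, (χ i)⁻¹ (b i)) = ∏ i, χ i (a i - b i) := by
      intro χ
      rw [← Finset.prod_mul_distrib]
      refine Finset.prod_congr rfl fun i _ => ?_
      rw [AddChar.inv_apply, ← AddChar.map_add_eq_mul, sub_eq_add_neg]
    simp_rw [h1]
    rw [← Fintype.prod_sum (fun i (ξ : AddChar (X (.inl i)) ℂ) => ξ (a i - b i))]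
    have h2 : ∀ i : Ei, (∑ ξ : AddChar (X (.inl i)) ℂ, ξ (a i - b i))
        = if a i = b i then (Fintype.card (X (.inl i)) : ℂ) else 0 := by
      intro i
      rw [AddChar.sum_apply_eq_ite]
      simp [sub_eq_zero]
    simp_rw [h2]
    rw [prod_ite_zero (fun i => a i = b i) (fun i => (Fintype.card (X (.inl i)) : ℂ)), hC]
    simp only [← funext_iff]
  -- assembly
  rw [step1]
  have chain1 : ∀ χ : ∀ i : Ei, AddChar (X (.inl i)) ℂ,
      (∏ v : V, dualF X ends extEnd f (.inl v)
          (fun e' => combine (e1 (χ, fun i => (χ i)⁻¹)) ψe e'.1))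
        = ∑ g : ∀ v : V, (e : {e : Ei ⊕ Ee // Inc ends extEnd v e}) → X e.1,
            ∏ v : V, (f v (g v) * ∏ e : {e : Ei ⊕ Ee // Inc ends extEnd v e},
              cChar X ends extEnd ψe χ v e (g v e)) := by
    intro χ
    rw [Finset.prod_congr rfl fun v _ => step2 χ v]
    exact Fintype.prod_sum _
  rw [Finset.sum_congr rfl fun χ _ => chain1 χ]
  rw [Finset.sum_comm]
  have chain2 : ∀ g : ∀ v : V, (e : {e : Ei ⊕ Ee // Inc ends extEnd v e}) → X e.1,
      (∑ χ : ∀ i : Ei, AddChar (X (.inl i)) ℂ,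
          ∏ v : V, (f v (g v) * ∏ e : {e : Ei ⊕ Ee // Inc ends extEnd v e},
            cChar X ends extEnd ψe χ v e (g v e)))
        = (∏ v : V, f v (g v))
            * ((if (fun i => g (ends i).1 ⟨.inl i, Or.inl rfl⟩)
                  = (fun i => g (ends i).2 ⟨.inl i, Or.inr rfl⟩) then C else 0)
              * ∏ j : Ee, ψe j (g (extEnd j) ⟨.inr j, rfl⟩)) := by
    intro g
    have h1 : ∀ χ : ∀ i : Ei, AddChar (X (.inl i)) ℂ,
        (∏ v : V, (f v (g v) * ∏ e : {e : Ei ⊕ Ee // Inc ends extEnd v e},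
            cChar X ends extEnd ψe χ v e (g v e)))
          = (∏ v : V, f v (g v))
              * (((∏ i : Ei, χ i (g (ends i).1 ⟨.inl i, Or.inl rfl⟩))
                  * ∏ i : Ei, (χ i)⁻¹ (g (ends i).2 ⟨.inl i, Or.inr rfl⟩))
                * ∏ j : Ee, ψe j (g (extEnd j) ⟨.inr j, rfl⟩)) := by
      intro χ
      rw [Finset.prod_mul_distrib, step4 χ g, mul_assoc]
    rw [Finset.sum_congr rfl fun χ _ => h1 χ]
    rw [← Finset.mul_sum, ← Finset.sum_mul, step5]
  rw [Finset.sum_congr rfl fun g _ => chain2 g]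
  -- reindex configurations edgewise
  set G : (∀ v : V, (e : {e : Ei ⊕ Ee // Inc ends extEnd v e}) → X e.1) → ℂ :=
    fun g => (∏ v : V, f v (g v))
      * ((if (fun i => g (ends i).1 ⟨.inl i, Or.inl rfl⟩)
            = (fun i => g (ends i).2 ⟨.inl i, Or.inr rfl⟩) then C else 0)
        * ∏ j : Ee, ψe j (g (extEnd j) ⟨.inr j, rfl⟩)) with hG
  have hre2 := Fintype.sum_equiv (configEquiv X ends extEnd hne) G
    (fun t => G ((configEquiv X ends extEnd hne).symm t))
    (fun g => by simp)
  rw [hre2]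
  rw [Fintype.sum_prod_type, Fintype.sum_prod_type]
  have c3 : ∀ (a b : ∀ i : Ei, X (.inl i)) (q : ∀ j : Ee, X (.inr j)) (j : Ee),
      (configEquiv X ends extEnd hne).symm ((a, b), q) (extEnd j) ⟨.inr j, rfl⟩ = q j :=
    fun a b q j => rfl
  have heval : ∀ (a b : ∀ i : Ei, X (.inl i)) (q : ∀ j : Ee, X (.inr j)),
      G ((configEquiv X ends extEnd hne).symm ((a, b), q))
        = (∏ v : V, f v ((configEquiv X ends extEnd hne).symm ((a, b), q) v))
            * ((if a = b then C else 0) * ∏ j : Ee, ψe j (q j)) := by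
    intro a b q
    have c1 : (fun i => (configEquiv X ends extEnd hne).symm ((a, b), q) (ends i).1
        ⟨.inl i, Or.inl rfl⟩) = a := by
      funext i; simp [configEquiv]
    have c2 : (fun i => (configEquiv X ends extEnd hne).symm ((a, b), q) (ends i).2
        ⟨.inl i, Or.inr rfl⟩) = b := by
      funext i; simp [configEquiv, hne i]
    simp only [hG, c1, c2, c3]
  have hpack : ∀ (a b : ∀ i : Ei, X (.inl i)) (q : ∀ j : Ee, X (.inr j)),
      G ((configEquiv X ends extEnd hne).symm ((a, b), q))
        = if b = a then
            (∏ v : V, f v ((configEquiv X ends extEnd hne).symm ((a, b), q) v))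
              * (C * ∏ j : Ee, ψe j (q j))
          else 0 := by
    intro a b q
    rw [heval]
    by_cases h : b = a
    · subst h; simp
    · rw [if_neg (fun hh => h hh.symm), if_neg h]
      simp
  simp_rw [hpack]
  have hcollapse : ∀ a : ∀ i : Ei, X (.inl i),
      (∑ b : ∀ i : Ei, X (.inl i), ∑ q : ∀ j : Ee, X (.inr j),
          if b = a then
            (∏ v : V, f v ((configEquiv X ends extEnd hne).symm ((a, b), q) v))
              * (C * ∏ j : Ee, ψe j (q j))
          else 0)
        = ∑ q : ∀ j : Ee, X (.inr j),
            (∏ v : V, f v ((configEquiv X ends extEnd hne).symm ((a, a), q) v))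
              * (C * ∏ j : Ee, ψe j (q j)) := by
    intro a
    rw [Finset.sum_comm]
    refine Finset.sum_congr rfl fun q _ => ?_
    rw [Finset.sum_ite_eq' Finset.univ a]
    simp
  rw [Finset.sum_congr rfl fun a _ => hcollapse a]
  have hdiag : ∀ (a : ∀ i : Ei, X (.inl i)) (q : ∀ j : Ee, X (.inr j)),
      (configEquiv X ends extEnd hne).symm ((a, a), q)
        = fun v (e : {e : Ei ⊕ Ee // Inc ends extEnd v e}) => combine a q e.1 := by
    intro a q
    funext v e
    rcases e with ⟨(i | j), h⟩
    · simp [configEquiv, combine]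
    · rfl
  simp_rw [hdiag]
  -- finish
  rw [Finset.sum_comm, Finset.mul_sum]
  refine Finset.sum_congr rfl fun q _ => ?_
  rw [← Finset.sum_mul]
  rw [show Zfun X ends extEnd f q = ∑ a : ∀ i : Ei, X (.inl i),
      ∏ v : V, f v (fun e => combine a q e.1) from by
    rw [Zfun]]
  ring
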